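/- Let G be a finite abelian group and let T^m be a multi-subset of G with multiplicity function m_T : G → ℕ. Then T^m is integral (i.e., Σ_{g∈G} m_T(g)χ(g) ∈ ℤ for every irreducible character χ of G) if and only if T^m belongs to the integral cone C(G), i.e., the multiplicity function m_T is constant on each atom [g] = {x ∈ G : ⟨x⟩ = ⟨g⟩}. -/

import Mathlib

open Finset Subgroup

private lemma pow_exp_bijective {H : Type*} [CommGroup H] [Finite H] {a : ℕ}
    (ha : a.Coprime (Monoid.exponent H)) : Function.Bijective (fun x : H => x ^ a) := by
  rw [← Finite.injective_iff_bijective]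
  intro x y hxy
  simp only at hxy
  have h1 : (x / y) ^ a = 1 := by rw [div_pow, hxy, div_self']
  have h2 : orderOf (x / y) ∣ Nat.gcd a (Monoid.exponent H) :=
    Nat.dvd_gcd (orderOf_dvd_of_pow_eq_one h1) (Monoid.order_dvd_exponent _)
  rw [ha] at h2
  have h3 : x / y = 1 := orderOf_eq_one_iff.mp (Nat.eq_one_of_dvd_one h2)
  exact div_eq_one.mp h3

private lemma zpowers_pow_eq {H : Type*} [Group H] [Finite H] {a : ℕ} (g : H)
    (ha : a.Coprime (orderOf g)) : Subgroup.zpowers (g ^ a) = Subgroup.zpowers g := by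
  have hle : Subgroup.zpowers (g ^ a) ≤ Subgroup.zpowers g :=
    Subgroup.zpowers_le.mpr (Subgroup.mem_zpowers_iff.mpr ⟨(a : ℤ), by simp⟩)
  refine Subgroup.eq_of_le_of_card_ge hle ?_
  have h1 : orderOf (g ^ a) = orderOf g := by
    rw [orderOf_pow, Nat.Coprime.gcd_eq_one ha.symm, Nat.div_one]
  rw [Nat.card_zpowers, Nat.card_zpowers, h1]

private lemma gal_main {G : Type*} [CommGroup G] [Fintype G] (m : G → ℕ) (χ : G →* ℂ) :
    ((∀ g g' : G, Subgroup.zpowers g = Subgroup.zpowers g' → m g = m g') →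
      ∃ z : ℤ, ∑ g : G, (m g : ℂ) * χ g = (z : ℂ)) ∧
    (∀ z : ℤ, (∑ g : G, (m g : ℂ) * χ g = (z : ℂ)) → ∀ a : ℕ,
      a.Coprime (Monoid.exponent G) → ∑ g : G, (m g : ℂ) * χ g ^ a = (z : ℂ)) := by
  classical
  have hn : Monoid.exponent G ≠ 0 := Monoid.exponent_ne_zero_of_finite
  set n := Monoid.exponent G with hn_def
  haveI : NeZero n := ⟨hn⟩
  let N : ℕ+ := ⟨n, Nat.pos_of_ne_zero hn⟩
  haveI : NeZero ((N : ℕ) : ℚ) := ⟨by exact_mod_cast hn⟩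
  set K := CyclotomicField N ℚ with hK_def
  haveI : IsCyclotomicExtension {(N : ℕ)} ℚ K := CyclotomicField.isCyclotomicExtension (N : ℕ) ℚ
  haveI : IsGalois ℚ K := IsCyclotomicExtension.isGalois {(N : ℕ)} ℚ K
  haveI : FiniteDimensional ℚ K := IsCyclotomicExtension.finiteDimensional {(N : ℕ)} ℚ K
  haveI : Algebra.IsAlgebraic ℚ K := Algebra.IsAlgebraic.of_finite ℚ K
  let ι : K →ₐ[ℚ] ℂ := IsAlgClosed.lift
  have hι : Function.Injective ι := ι.toRingHom.injective
  have hζ : IsPrimitiveRoot (IsCyclotomicExtension.zeta (N : ℕ) ℚ K) N :=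
    IsCyclotomicExtension.zeta_spec (N : ℕ) ℚ K
  set ζ := IsCyclotomicExtension.zeta (N : ℕ) ℚ K with hζ_def
  have hζn : ζ ^ n = 1 := hζ.pow_eq_one
  have hμ : IsPrimitiveRoot (ι ζ) N := hζ.map_of_injective hι
  haveI : NeZero ((N : ℕ)) := ⟨hn⟩
  have hχn : ∀ g : G, χ g ^ n = 1 := fun g => by
    rw [← map_pow, hn_def, Monoid.pow_exponent_eq_one, map_one]
  have lift : ∀ g : G, ∃ y : K, ι y = χ g ∧ y ^ n = 1 := fun g => by
    obtain ⟨i, -, hi⟩ := hμ.eq_pow_of_pow_eq_one (hχn g)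
    exact ⟨ζ ^ i, by rw [map_pow, hi], by
      rw [← pow_mul, mul_comm, pow_mul, hζn, one_pow]⟩
  choose x hx hxn using lift
  have key : ∀ σ : K ≃ₐ[ℚ] K, ∀ y : K, y ^ n = 1 →
      σ y = y ^ ((hζ.autToPow ℚ σ : ZMod N)).val := by
    intro σ y hy
    obtain ⟨i, -, rfl⟩ := hζ.eq_pow_of_pow_eq_one hy
    rw [map_pow, ← hζ.autToPow_spec ℚ σ, ← pow_mul, mul_comm, pow_mul]
  set s : K := ∑ g : G, (m g : K) * x g with hs_def
  have hs : ι s = ∑ g : G, (m g : ℂ) * χ g := by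
    rw [map_sum]; exact Finset.sum_congr rfl fun g _ => by rw [map_mul, map_natCast, hx]
  constructor
  · intro hm
    have hfix : ∀ σ : K ≃ₐ[ℚ] K, σ s = s := by
      intro σ
      set a := ((hζ.autToPow ℚ σ : ZMod N)).val with ha_def
      have hacop : a.Coprime n := ZMod.val_coe_unit_coprime (hζ.autToPow ℚ σ)
      have hxa : ∀ g : G, x g ^ a = x (g ^ a) := fun g =>
        hι (by rw [map_pow, hx, hx, map_pow])
      calc σ s = ∑ g : G, (m (g ^ a) : K) * x (g ^ a) := by
            rw [hs_def, map_sum]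
            refine Finset.sum_congr rfl fun g _ => ?_
            rw [map_mul, map_natCast, key σ _ (hxn g), ← ha_def, hxa,
              ← hm (g ^ a) g (zpowers_pow_eq g
                (hacop.coprime_dvd_right (Monoid.order_dvd_exponent g)))]
        _ = s := Fintype.sum_bijective _ (pow_exp_bijective hacop) _ _ (fun g => rfl)
    have hsbot : s ∈ (⊥ : IntermediateField ℚ K) := by
      have htfae := IsGalois.tfae (F := ℚ) (E := K)
      have htop : IntermediateField.fixedField (⊤ : Subgroup (K ≃ₐ[ℚ] K)) = ⊥ :=
        (htfae.out 0 1).mp (by infer_instance)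
      rw [← htop]
      exact fun σ => hfix σ.1
    obtain ⟨q, hq⟩ := IntermediateField.mem_bot.mp hsbot
    have hint : IsIntegral ℤ (ι s) := by
      rw [hs]
      refine IsIntegral.sum _ fun g _ => IsIntegral.mul ?_ ?_
      · exact ⟨Polynomial.X - Polynomial.C (m g : ℤ), Polynomial.monic_X_sub_C _, by simp⟩
      · refine ⟨Polynomial.X ^ n - 1, ?_, ?_⟩
        · simpa using Polynomial.monic_X_pow_sub_C (1 : ℤ) hn
        · simp [hχn g]
    have hqι : ι s = algebraMap ℚ ℂ q := by rw [← hq, AlgHom.commutes]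
    have hqint : IsIntegral ℤ q :=
      (isIntegral_algebraMap_iff ((algebraMap ℚ ℂ).injective)).mp (hqι ▸ hint)
    obtain ⟨z, hz⟩ := IsIntegrallyClosed.isIntegral_iff.mp hqint
    exact ⟨z, by rw [← hs, hqι, ← hz]; simp⟩
  · intro z hz a hacop
    let u : (ZMod N)ˣ := ZMod.unitOfCoprime a hacop
    set σ := (IsCyclotomicExtension.autEquivPow K
      (Polynomial.cyclotomic.irreducible_rat N.pos)).symm u with hσ_def
    have hupow : hζ.autToPow ℚ σ = u := by
      have h1 := (IsCyclotomicExtension.autEquivPow K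
        (Polynomial.cyclotomic.irreducible_rat N.pos)).apply_symm_apply u
      rw [IsCyclotomicExtension.autEquivPow_apply] at h1
      exact h1
    have haval : ((hζ.autToPow ℚ σ : ZMod N)).val = a % n := by
      rw [hupow, show u = ZMod.unitOfCoprime a hacop from rfl, ZMod.coe_unitOfCoprime]
      exact ZMod.val_natCast (n := (N : ℕ)) a
    have hseq : s = ((z : ℤ) : K) := hι (by rw [hs, hz, map_intCast])
    have hss : σ s = s := by rw [hseq, map_intCast]
    have h1 : σ s = ∑ g : G, (m g : K) * x g ^ (a % n) := by
      rw [hs_def, map_sum]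
      refine Finset.sum_congr rfl fun g _ => ?_
      rw [map_mul, map_natCast, key σ _ (hxn g), haval]
    have h2 : ι (σ s) = ∑ g : G, (m g : ℂ) * χ g ^ (a % n) := by
      rw [h1, map_sum]
      exact Finset.sum_congr rfl fun g _ => by rw [map_mul, map_natCast, map_pow, hx]
    have h3 : ∀ g : G, χ g ^ (a % n) = χ g ^ a := fun g => by
      conv_rhs => rw [← Nat.mod_add_div a n, pow_add, pow_mul, hχn g, one_pow, mul_one]
    calc ∑ g : G, (m g : ℂ) * χ g ^ a = ∑ g : G, (m g : ℂ) * χ g ^ (a % n) := by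
          exact Finset.sum_congr rfl fun g _ => by rw [h3]
      _ = ι (σ s) := h2.symm
      _ = ι s := by rw [hss]
      _ = (z : ℂ) := by rw [hs, hz]

/-- Lemma 3.2. Let `G` be a finite abelian group and `m` the multiplicity
function of a multi-subset of `G`. Then the multi-subset is integral
(`Σ_g m(g)χ(g) ∈ ℤ` for every irreducible character `χ` of `G`, i.e. every
degree-one character `χ : G →* ℂ`) iff it belongs to the integral cone `C(G)`,
i.e. `m` is constant on each atom `[g] = {x : ⟨x⟩ = ⟨g⟩}`. -/
theorem stmt9 {G : Type*} [CommGroup G] [Fintype G] (m : G → ℕ) :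
    (∀ χ : G →* ℂ, ∃ z : ℤ, ∑ g : G, (m g : ℂ) * χ g = (z : ℂ)) ↔
      ∀ g g' : G, Subgroup.zpowers g = Subgroup.zpowers g' → m g = m g' := by
  constructor
  · intro h g g' hzp
    classical
    haveI : NeZero ((Monoid.exponent G : ℂ)) :=
      ⟨by exact_mod_cast Monoid.exponent_ne_zero_of_finite⟩
    haveI : HasEnoughRootsOfUnity ℂ (Monoid.exponent G) := inferInstance
    obtain ⟨e⟩ := CommGroup.monoidHom_mulEquiv_of_hasEnoughRootsOfUnity G ℂ
    letI : Fintype (G →* ℂˣ) := Fintype.ofEquiv G e.toEquiv.symm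
    have hcard : Fintype.card (G →* ℂˣ) = Fintype.card G := Fintype.card_congr e.toEquiv
    -- orthogonality
    have horth : ∀ h0 : G, ∑ χ : G →* ℂˣ, ((χ h0 : ℂ)) =
        if h0 = 1 then (Fintype.card G : ℂ) else 0 := by
      intro h0
      by_cases hh : h0 = 1
      · simp [hh, hcard]
      · obtain ⟨χ₀, hχ₀⟩ := CommGroup.exists_apply_ne_one_of_hasEnoughRootsOfUnity G ℂ hh
        have key : (χ₀ h0 : ℂ) * ∑ χ : G →* ℂˣ, (χ h0 : ℂ) = ∑ χ : G →* ℂˣ, (χ h0 : ℂ) := by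
          rw [Finset.mul_sum]
          exact Fintype.sum_bijective (fun χ => χ₀ * χ) (Group.mulLeft_bijective χ₀) _ _
            (fun χ => by simp)
        have h1 : ((χ₀ h0 : ℂ) - 1) * ∑ χ : G →* ℂˣ, (χ h0 : ℂ) = 0 := by
          rw [sub_mul, one_mul, key, sub_self]
        rcases mul_eq_zero.mp h1 with h2 | h2
        · exact absurd (Units.val_eq_one.mp (sub_eq_zero.mp h2)) hχ₀
        · simp [hh, h2]
    -- Fourier inversion
    have hinv : ∀ g0 : G, ∑ χ : G →* ℂˣ, (∑ y : G, (m y : ℂ) * (χ y : ℂ)) * ((χ g0⁻¹ : ℂ)) =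
        (Fintype.card G : ℂ) * m g0 := by
      intro g0
      have hstep : ∀ χ : G →* ℂˣ, (∑ y : G, (m y : ℂ) * (χ y : ℂ)) * (χ g0⁻¹ : ℂ) =
          ∑ y : G, (m y : ℂ) * ((χ (y * g0⁻¹) : ℂ)) := by
        intro χ
        rw [Finset.sum_mul]
        exact Finset.sum_congr rfl fun y _ => by rw [mul_assoc, map_mul, Units.val_mul]
      rw [Finset.sum_congr rfl fun χ _ => hstep χ, Finset.sum_comm]
      calc ∑ y : G, ∑ χ : G →* ℂˣ, (m y : ℂ) * (χ (y * g0⁻¹) : ℂ)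
          = ∑ y : G, (m y : ℂ) * (if y = g0 then (Fintype.card G : ℂ) else 0) := by
            refine Finset.sum_congr rfl fun y _ => ?_
            rw [← Finset.mul_sum, horth]
            simp [mul_inv_eq_one]
        _ = (Fintype.card G : ℂ) * m g0 := by
            simp only [mul_ite, mul_zero]
            rw [Finset.sum_ite_eq' Finset.univ g0 (fun y => (m y : ℂ) * (Fintype.card G : ℂ))]
            simp [mul_comm]
    -- order facts
    have hg'mem : g' ∈ Subgroup.zpowers g := hzp ▸ Subgroup.mem_zpowers g'
    obtain ⟨k, hk⟩ := Submonoid.mem_powers_iff _ _ |>.mp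
      (mem_powers_iff_mem_zpowers.mpr hg'mem)
    have hd0 : orderOf g ≠ 0 := (orderOf_pos g).ne'
    have hdord : orderOf g' = orderOf g := by
      rw [← Nat.card_zpowers, ← Nat.card_zpowers, hzp]
    have hgcd : Nat.gcd (orderOf g) k = 1 := by
      have h1 : orderOf (g ^ k) = orderOf g := by rw [hk, hdord]
      rw [orderOf_pow] at h1
      by_contra hne
      have hpos : 0 < Nat.gcd (orderOf g) k :=
        Nat.gcd_pos_of_pos_left k (Nat.pos_of_ne_zero hd0)
      have hgt : 1 < Nat.gcd (orderOf g) k := lt_of_le_of_ne hpos (Ne.symm hne)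
      have := Nat.div_lt_self (Nat.pos_of_ne_zero hd0) hgt
      omega
    -- lift k to a coprime to card G
    haveI : NeZero (Fintype.card G) := ⟨Fintype.card_ne_zero⟩
    have hdc : orderOf g ∣ Fintype.card G := orderOf_dvd_card
    obtain ⟨u, hu⟩ := ZMod.unitsMap_surjective hdc
      (ZMod.unitOfCoprime k (Nat.Coprime.symm hgcd))
    set a := (u : ZMod (Fintype.card G)).val with ha_def
    have hac : a.Coprime (Fintype.card G) := ZMod.val_coe_unit_coprime u
    have hamod : a ≡ k [MOD orderOf g] := by
      have h2 := congrArg (Units.val) hu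
      rw [ZMod.unitsMap_def] at h2
      have h3 : ((a : ZMod (orderOf g))) = ((k : ZMod (orderOf g))) := by
        rw [ha_def, ZMod.natCast_val]
        simpa [ZMod.castHom_apply, ZMod.coe_unitOfCoprime] using h2
      exact (ZMod.natCast_eq_natCast_iff _ _ _).mp h3
    have hga : g ^ a = g' := by rw [← hk]; exact pow_eq_pow_iff_modEq.mpr hamod
    have han : a.Coprime (Monoid.exponent G) :=
      hac.coprime_dvd_right Group.exponent_dvd_card
    -- character sums are integers
    have hS : ∀ ψ : G →* ℂˣ, ∃ z : ℤ, ∑ y : G, (m y : ℂ) * (ψ y : ℂ) = (z : ℂ) := fun ψ =>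
      h ((Units.coeHom ℂ).comp ψ)
    choose z hz using hS
    have hSa : ∀ ψ : G →* ℂˣ, ∑ y : G, (m y : ℂ) * ((ψ y : ℂ)) ^ a = (z ψ : ℂ) := fun ψ =>
      (gal_main m ((Units.coeHom ℂ).comp ψ)).2 (z ψ) (hz ψ) a han
    -- bijectivity of ψ ↦ ψ^a on the dual group
    have hexpD : Monoid.exponent (G →* ℂˣ) ∣ Fintype.card G := by
      rw [← hcard]; exact Group.exponent_dvd_card
    have haD : a.Coprime (Monoid.exponent (G →* ℂˣ)) := hac.coprime_dvd_right hexpD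
    have hbijD := pow_exp_bijective haD
    -- main computation
    have hmain : (Fintype.card G : ℂ) * m (g ^ a) = (Fintype.card G : ℂ) * m g := by
      calc (Fintype.card G : ℂ) * m (g ^ a)
          = ∑ ψ : G →* ℂˣ, (∑ y : G, (m y : ℂ) * (ψ y : ℂ)) * ((ψ (g ^ a)⁻¹ : ℂ)) :=
            (hinv (g ^ a)).symm
        _ = ∑ ψ : G →* ℂˣ, (∑ y : G, (m y : ℂ) * ((ψ ^ a) y : ℂ)) * (((ψ ^ a) g⁻¹ : ℂ)) := by
            refine Finset.sum_congr rfl fun ψ _ => ?_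
            have e1 : ∑ y : G, (m y : ℂ) * ((ψ ^ a) y : ℂ) = (z ψ : ℂ) := by
              rw [← hSa ψ]
              exact Finset.sum_congr rfl fun y _ => by
                simp [MonoidHom.pow_apply, Units.val_pow_eq_pow_val]
            have e2 : ((ψ (g ^ a)⁻¹ : ℂ)) = (((ψ ^ a) g⁻¹ : ℂ)) := by
              simp [MonoidHom.pow_apply, Units.val_pow_eq_pow_val, inv_pow, map_pow]
            rw [e1, ← e2, hz ψ]
        _ = ∑ φ : G →* ℂˣ, (∑ y : G, (m y : ℂ) * (φ y : ℂ)) * ((φ g⁻¹ : ℂ)) :=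
            Fintype.sum_bijective _ hbijD _ _ (fun ψ => rfl)
        _ = (Fintype.card G : ℂ) * m g := hinv g
    have hcast : (m (g ^ a) : ℂ) = (m g : ℂ) :=
      mul_left_cancel₀ (by exact_mod_cast (Fintype.card_ne_zero : Fintype.card G ≠ 0)) hmain
    have : m (g ^ a) = m g := by exact_mod_cast hcast
    rw [← hga, this]
  · intro hm χ
    exact (gal_main m χ).1 hm
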